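/- Let γ̄ : ℝ/ℤ → ℝ² be a C¹ closed immersed curve contained in the strip {(x,y) : 0 ≤ y ≤ 1}, such that γ̄ meets both boundary lines y = 0 and y = 1. Then there exist two distinct points p, q on the image of γ̄ with the same y-coordinate, such that the tangent lines to γ̄ at p and q are parallel. -/

import Mathlib

open Filter Topology

private lemma hasDerivAt_fst' {γ : ℝ → ℝ × ℝ} {d : ℝ × ℝ} {t : ℝ} (h : HasDerivAt γ d t) :
    HasDerivAt (fun u => (γ u).1) d.1 t := by
  simpa using (h.hasFDerivAt.fst).hasDerivAt

private lemma hasDerivAt_snd' {γ : ℝ → ℝ × ℝ} {d : ℝ × ℝ} {t : ℝ} (h : HasDerivAt γ d t) :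
    HasDerivAt (fun u => (γ u).2) d.2 t := by
  simpa using (h.hasFDerivAt.snd).hasDerivAt

private lemma dep_lemma {a b : ℝ × ℝ} (ha : a ≠ 0) (hb : b ≠ 0)
    (h : a.1 * b.2 = b.1 * a.2) : ∃ c : ℝ, c ≠ 0 ∧ a = c • b := by
  by_cases hb1 : b.1 = 0
  · have hb2 : b.2 ≠ 0 := by
      intro hb2; exact hb (Prod.ext hb1 hb2)
    have ha1 : a.1 = 0 := by
      have := h; rw [hb1, zero_mul] at this
      exact (mul_eq_zero.mp this).resolve_right hb2
    have ha2 : a.2 ≠ 0 := by intro ha2; exact ha (Prod.ext ha1 ha2)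
    refine ⟨a.2 / b.2, div_ne_zero ha2 hb2, ?_⟩
    apply Prod.ext <;> simp [hb1, ha1, div_mul_cancel₀, hb2]
  · refine ⟨a.1 / b.1, ?_, ?_⟩
    · intro hc
      have ha1 : a.1 = 0 := by
        field_simp at hc; simpa using hc
      have ha2 : a.2 = 0 := by
        have := h; rw [ha1, zero_mul] at this
        exact (mul_eq_zero.mp this.symm).resolve_left hb1
      exact ha (Prod.ext ha1 ha2)
    · apply Prod.ext
      · simp [div_mul_cancel₀, hb1]
      · have : a.2 = a.1 / b.1 * b.2 := by field_simp; linarith [h]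
        simpa using this

open Filter Topology

private lemma key_lemma (x f : ℝ → ℝ) (hx : ContDiff ℝ 1 x) (hf : ContDiff ℝ 1 f) (s t : ℝ)
    (hst : f s = f t) (hft : deriv f t ≠ 0)
    (hmax : ∀ u v : ℝ, f u = f v → x u - x v ≤ x s - x t) :
    deriv x s * deriv f t = deriv x t * deriv f s := by
  have hfd : ∀ u, HasDerivAt f (deriv f u) u := fun u => (hf.differentiable one_ne_zero u).hasDerivAt
  have hxd : ∀ u, HasDerivAt x (deriv x u) u := fun u => (hx.differentiable one_ne_zero u).hasDerivAt
  have hsd : HasStrictDerivAt f (deriv f t) t := hf.contDiffAt.hasStrictDerivAt one_ne_zero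
  set g : ℝ → ℝ := hsd.localInverse f (deriv f t) t hft with hgdef
  have hgd : HasStrictDerivAt g (deriv f t)⁻¹ (f t) := hsd.to_localInverse hft
  have hleft : g (f t) = t := (hsd.hasStrictFDerivAt_equiv hft).localInverse_apply_image
  have hright : ∀ᶠ v in 𝓝 (f t), f (g v) = v :=
    (hsd.hasStrictFDerivAt_equiv hft).eventually_right_inverse
  have hgf : g (f s) = t := by rw [hst, hleft]
  have h1 : HasDerivAt (fun u => g (f u)) ((deriv f t)⁻¹ * deriv f s) s := by
    have hgd' : HasDerivAt g (deriv f t)⁻¹ (f s) := by rw [hst]; exact hgd.hasDerivAt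
    exact hgd'.comp s (hfd s)
  have hxt : HasDerivAt x (deriv x t) (g (f s)) := by rw [hgf]; exact hxd t
  have h2 : HasDerivAt (fun u => x (g (f u))) (deriv x t * ((deriv f t)⁻¹ * deriv f s)) s :=
    hxt.comp s h1
  have hφ : HasDerivAt (fun u => x u - x (g (f u)))
      (deriv x s - deriv x t * ((deriv f t)⁻¹ * deriv f s)) s := (hxd s).sub h2
  have hmem : ∀ᶠ u in 𝓝 s, f (g (f u)) = f u := by
    have hcont : ContinuousAt f s := hf.continuous.continuousAt
    have hright' : ∀ᶠ v in 𝓝 (f s), f (g v) = v := by rw [hst]; exact hright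
    exact hcont.eventually hright'
  have hlm : IsLocalMax (fun u => x u - x (g (f u))) s := by
    filter_upwards [hmem] with u hu
    have h3 := hmax u (g (f u)) hu.symm
    simpa [hgf] using h3
  have hz := hlm.hasDerivAt_eq_zero hφ
  field_simp at hz
  linarith

/-- A C¹ closed immersed curve in the horizontal strip 0 ≤ y ≤ 1 meeting
both boundary lines has two distinct points with the same y-coordinate (i.e. on the same
horizontal leaf) at which the tangent lines are parallel. -/


theorem parallel_tangents_in_strip
    (γ : ℝ → ℝ × ℝ) (hper : ∀ t, γ (t + 1) = γ t)
    (hC1 : ContDiff ℝ 1 γ) (himm : ∀ t, deriv γ t ≠ 0)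
    (hstrip : ∀ t, (γ t).2 ∈ Set.Icc (0 : ℝ) 1)
    (hbot : ∃ t, (γ t).2 = 0) (htop : ∃ t, (γ t).2 = 1) :
    ∃ s t : ℝ, γ s ≠ γ t ∧ (γ s).2 = (γ t).2 ∧
      ∃ c : ℝ, c ≠ 0 ∧ deriv γ s = c • deriv γ t := by
  set x : ℝ → ℝ := fun u => (γ u).1 with hxdef
  set f : ℝ → ℝ := fun u => (γ u).2 with hfdef
  have hper1 : Function.Periodic γ 1 := hper
  have hxc : ContDiff ℝ 1 x := hC1.fst
  have hfc : ContDiff ℝ 1 f := hC1.snd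
  have hγd : ∀ u, HasDerivAt γ (deriv γ u) u := fun u => (hC1.differentiable one_ne_zero u).hasDerivAt
  have hdx : ∀ u, deriv x u = (deriv γ u).1 := fun u => HasDerivAt.deriv (by
    simpa using ((hγd u).hasFDerivAt.fst).hasDerivAt)
  have hdf : ∀ u, deriv f u = (deriv γ u).2 := fun u => HasDerivAt.deriv (by
    simpa using ((hγd u).hasFDerivAt.snd).hasDerivAt)
  -- reduce to [0,1] by periodicity
  have hγint : ∀ u : ℝ, γ (Int.fract u) = γ u := by
    intro u
    have h6 : (Int.fract u : ℝ) = u - (⌊u⌋ : ℝ) * 1 := by rw [mul_one, Int.fract]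
    rw [h6]
    exact hper1.sub_int_mul_eq ⌊u⌋
  -- compact maximization
  set K : Set (ℝ × ℝ) := (Set.Icc (0:ℝ) 1 ×ˢ Set.Icc (0:ℝ) 1) ∩ {p | f p.1 = f p.2} with hKdef
  have hKcpt : IsCompact K := (isCompact_Icc.prod isCompact_Icc).inter_right
    (isClosed_eq (hfc.continuous.comp continuous_fst) (hfc.continuous.comp continuous_snd))
  have hKne : K.Nonempty := ⟨(0, 0), by simp [hKdef]⟩
  obtain ⟨⟨s0, t0⟩, hmemK, hmax0⟩ := hKcpt.exists_isMaxOn hKne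
    ((hxc.continuous.comp continuous_fst).sub (hxc.continuous.comp continuous_snd)).continuousOn
  have hs0t0 : f s0 = f t0 := hmemK.2
  have hxint : ∀ u : ℝ, x (Int.fract u) = x u := fun u => congrArg Prod.fst (hγint u)
  have hfint : ∀ u : ℝ, f (Int.fract u) = f u := fun u => congrArg Prod.snd (hγint u)
  have hmax : ∀ u v : ℝ, f u = f v → x u - x v ≤ x s0 - x t0 := by
    intro u v huv
    have hu : (Int.fract u, Int.fract v) ∈ K := by
      refine ⟨⟨⟨Int.fract_nonneg u, (Int.fract_lt_one u).le⟩,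
        ⟨Int.fract_nonneg v, (Int.fract_lt_one v).le⟩⟩, ?_⟩
      show f (Int.fract u) = f (Int.fract v)
      rw [hfint, hfint]; exact huv
    have h5 := hmax0 hu
    simp only [Function.comp] at h5
    calc x u - x v = x (Int.fract u) - x (Int.fract v) := by rw [hxint, hxint]
      _ ≤ x s0 - x t0 := h5
  have hM0 : 0 ≤ x s0 - x t0 := by have := hmax 0 0 rfl; linarith
  -- The maximum is positive
  have hMpos : 0 < x s0 - x t0 := by
    rcases hM0.lt_or_eq with h | h
    · exact h
    exfalso
    have hxeq : ∀ u v : ℝ, f u = f v → x u = x v := by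
      intro u v huv
      have h1 := hmax u v huv
      have h2 := hmax v u huv.symm
      linarith [h1, h2, h.symm]
    obtain ⟨t1, ht1⟩ := htop
    have ht1' : f t1 = 1 := ht1
    have hftop : ∀ u, f u ≤ f t1 := by
      intro u; rw [ht1']; exact (hstrip u).2
    have hflm : IsLocalMax f t1 := Filter.Eventually.of_forall hftop
    have hdf0 : deriv f t1 = 0 := hflm.deriv_eq_zero
    have ha : deriv x t1 ≠ 0 := by
      intro h0
      apply himm t1
      have : deriv γ t1 = ((deriv γ t1).1, (deriv γ t1).2) := rfl
      rw [this, ← hdx, ← hdf, h0, hdf0]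
      rfl
    -- strict monotonicity near t1
    have hcx : Continuous (deriv x) := hxc.continuous_deriv le_rfl
    obtain ⟨δ0, hδ0, hball⟩ := Metric.continuousAt_iff.mp hcx.continuousAt (|deriv x t1|)
      (abs_pos.mpr ha)
    set δ := δ0 / 2 with hδdef
    have hδ : 0 < δ := by positivity
    have hsign : ∀ u ∈ Set.Icc (t1 - δ) (t1 + δ), |deriv x u - deriv x t1| < |deriv x t1| := by
      intro u hu
      apply hball
      rw [Real.dist_eq]
      rw [Set.mem_Icc] at hu
      rw [abs_sub_lt_iff]
      constructor <;> linarith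
    have hinj : Set.InjOn x (Set.Icc (t1 - δ) (t1 + δ)) := by
      rcases lt_or_gt_of_ne ha with hneg | hpos
      · refine (strictAntiOn_of_deriv_neg (convex_Icc _ _) hxc.continuous.continuousOn ?_).injOn
        intro u hu
        have := hsign u (interior_subset hu)
        rw [abs_of_neg hneg, abs_lt] at this
        linarith
      · refine (strictMonoOn_of_deriv_pos (convex_Icc _ _) hxc.continuous.continuousOn ?_).injOn
        intro u hu
        have := hsign u (interior_subset hu)
        rw [abs_of_pos hpos, abs_lt] at this
        linarith
    by_cases h1 : f (t1 - δ) = 1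
    · have hx1 : x (t1 - δ) = x t1 := hxeq _ _ (by rw [h1, ht1'])
      have := hinj ⟨le_refl _, by linarith⟩ ⟨by linarith, by linarith⟩ hx1
      linarith
    · have h1' : f (t1 - δ) < 1 := lt_of_le_of_ne (hstrip _).2 h1
      obtain ⟨η, hη, hballf⟩ := Metric.continuousAt_iff.mp hfc.continuous.continuousAt
        (1 - f (t1 - δ)) (by linarith)
      set h : ℝ := min δ (η / 2) with hhdef
      have hh : 0 < h := lt_min hδ (by positivity)
      have hhδ : h ≤ δ := min_le_left _ _
      have hfh : f (t1 - δ) < f (t1 + h) := by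
        have : dist (t1 + h) t1 < η := by
          rw [Real.dist_eq]
          have : h ≤ η / 2 := min_le_right _ _
          rw [abs_of_pos (by linarith : (0:ℝ) < t1 + h - t1)]
          linarith
        have := hballf this
        rw [Real.dist_eq, ht1', abs_lt] at this
        linarith [this.1]
      obtain ⟨u, hu, hfu⟩ := intermediate_value_Icc (by linarith : t1 - δ ≤ t1)
        hfc.continuous.continuousOn (by
          constructor
          · exact hfh.le
          · rw [ht1']; exact (hstrip _).2)
      have hxu : x u = x (t1 + h) := hxeq _ _ (by rw [hfu])
      have huIcc : u ∈ Set.Icc (t1 - δ) (t1 + δ) := ⟨hu.1, by linarith [hu.2]⟩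
      have hhIcc : t1 + h ∈ Set.Icc (t1 - δ) (t1 + δ) := ⟨by linarith, by linarith⟩
      have := hinj huIcc hhIcc hxu
      linarith [hu.2]
  -- conclude at the maximizer
  have hne : γ s0 ≠ γ t0 := by
    intro heq
    have : x s0 = x t0 := congrArg Prod.fst heq
    linarith
  have hdet : deriv x s0 * deriv f t0 = deriv x t0 * deriv f s0 := by
    by_cases hft0 : deriv f t0 = 0
    · by_cases hfs0 : deriv f s0 = 0
      · rw [hft0, hfs0]; ring
      · have := key_lemma (fun u => -x u) f (hxc.neg) hfc t0 s0 hs0t0.symm hfs0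
          (fun u v huv => by have := hmax v u huv.symm; show -x u - -x v ≤ -x t0 - -x s0; linarith)
        simp only [deriv.fun_neg] at this
        linarith
    · exact key_lemma x f hxc hfc s0 t0 hs0t0 hft0 hmax
  obtain ⟨c, hc, hceq⟩ := dep_lemma (himm s0) (himm t0) (by
    rw [← hdx, ← hdf, ← hdx, ← hdf]; exact hdet)
  exact ⟨s0, t0, hne, hs0t0, c, hc, hceq⟩
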